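/- arXiv:2112.02677 — 2 statements merged into one kernel-verified Lean document; each statement's English description precedes it below -/
import Mathlib

section
/- Let C > 0, p, q ∈ ℕ and M := sup_r |y_r| r^{q+2} < ∞ for y : ℕ → ℂ, and suppose |a^{(l)}_{ij}| ≤ C^l j^q i^{-p} for all l, i, j (with a^{(0)}_{ij} = δ_{ij} so that the l = 0 term is y t^{-1}). Define Y(t)_i := Σ_{l=0}^∞ Σ_{j=1}^∞ a^{(l)}_{ij} y_j t^{-l-1} for t > C. Then for t > 2C: sup_i |Y(t)_i| i^p ≤ (1/(2C)) sup_i |y_i| i^p + (π²/(12C)) · M. -/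
open Real

/-- Uniform boundedness of the resolvent-type series `Y(t)` in the weighted norms of
`s(ℕ)` for `t > 2C`. -/
theorem resolvent_series_bound (C : ℝ) (hC : 0 < C) (p q : ℕ) (y : ℕ → ℂ) (M P : ℝ)
    (hM : ∀ r : ℕ, 1 ≤ r → ‖y r‖ * (r : ℝ) ^ (q + 2) ≤ M)
    (hP : ∀ i : ℕ, 1 ≤ i → ‖y i‖ * (i : ℝ) ^ p ≤ P)
    (a : ℕ → ℕ → ℕ → ℂ)
    (ha : ∀ l i j : ℕ, 1 ≤ l → 1 ≤ i → 1 ≤ j →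
      ‖a l i j‖ ≤ C ^ l * (j : ℝ) ^ q / (i : ℝ) ^ p)
    (t : ℝ) (ht : 2 * C < t) :
    ∀ i : ℕ, 1 ≤ i →
      ‖y i * (t : ℂ)⁻¹ +
          ∑' l : ℕ, (∑' j : ℕ, a (l + 1) i (j + 1) * y (j + 1)) * ((t : ℂ) ^ (l + 2))⁻¹‖
        * (i : ℝ) ^ p
      ≤ (1 / (2 * C)) * P + (π ^ 2 / (12 * C)) * M := by
  intro i hi
  have ht0 : 0 < t := lt_trans (by positivity) ht
  have hr0 : 0 ≤ C / t := by positivity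
  have hr1 : C / t < 1 / 2 := by
    rw [div_lt_div_iff₀ ht0 two_pos]; linarith
  have hip : (1:ℝ) ≤ (i:ℝ) ^ p := one_le_pow₀ (by exact_mod_cast hi)
  have hip0 : (0:ℝ) < (i:ℝ) ^ p := lt_of_lt_of_le one_pos hip
  have hM0 : 0 ≤ M := le_trans (by positivity) (hM 1 le_rfl)
  -- pointwise bound on the inner summands
  have key : ∀ l j : ℕ, ‖a (l+1) i (j+1) * y (j+1)‖ ≤
      C ^ (l+1) * M / (i:ℝ) ^ p * (1 / ((j:ℝ)+1) ^ 2) := by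
    intro l j
    rw [norm_mul]
    have h1 := ha (l+1) i (j+1) (by omega) hi (by omega)
    have h2 := hM (j+1) (by omega)
    have hj1 : (0:ℝ) < ((j:ℝ)+1) := by positivity
    calc ‖a (l+1) i (j+1)‖ * ‖y (j+1)‖
        ≤ (C ^ (l+1) * (((j+1:ℕ)):ℝ) ^ q / (i:ℝ) ^ p) *
            (M / (((j+1:ℕ)):ℝ) ^ (q+2)) := by
          apply mul_le_mul h1 _ (norm_nonneg _) (by positivity)
          rw [le_div_iff₀ (by positivity)]
          exact h2
      _ = C ^ (l+1) * M / (i:ℝ) ^ p * (1 / ((j:ℝ)+1) ^ 2) := by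
          push_cast
          rw [pow_add ((j:ℝ)+1) q 2]
          field_simp
  -- Basel sum
  have hbasel : HasSum (fun j : ℕ => 1 / ((j:ℝ)+1) ^ 2) (π ^ 2 / 6) := by
    have h := (hasSum_nat_add_iff' (f := fun n : ℕ => (1:ℝ) / (n:ℝ) ^ 2) 1).mpr
      hasSum_zeta_two
    simp only [Finset.range_one, Finset.sum_singleton, Nat.cast_zero] at h
    norm_num at h
    convert h using 2 with j
    push_cast
    rfl
    ring_nf
  -- inner summability and bound
  have hsum_inner : ∀ l : ℕ, Summable (fun j : ℕ => a (l+1) i (j+1) * y (j+1)) := by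
    intro l
    exact Summable.of_norm_bounded (hbasel.summable.mul_left _) (key l)
  have hinner : ∀ l : ℕ, ‖∑' j : ℕ, a (l+1) i (j+1) * y (j+1)‖ ≤
      C ^ (l+1) * M / (i:ℝ) ^ p * (π ^ 2 / 6) := by
    intro l
    have hsn : Summable (fun j : ℕ => ‖a (l+1) i (j+1) * y (j+1)‖) :=
      Summable.of_nonneg_of_le (fun j => norm_nonneg _) (key l)
        (hbasel.summable.mul_left _)
    calc ‖∑' j : ℕ, a (l+1) i (j+1) * y (j+1)‖
        ≤ ∑' j : ℕ, ‖a (l+1) i (j+1) * y (j+1)‖ := norm_tsum_le_tsum_norm hsn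
      _ ≤ ∑' j : ℕ, C ^ (l+1) * M / (i:ℝ) ^ p * (1 / ((j:ℝ)+1) ^ 2) :=
          Summable.tsum_le_tsum (key l) hsn (hbasel.summable.mul_left _)
      _ = C ^ (l+1) * M / (i:ℝ) ^ p * (π ^ 2 / 6) := by
          rw [(hbasel.mul_left (C ^ (l+1) * M / (i:ℝ) ^ p)).tsum_eq]
  -- outer terms bound by a geometric series
  set K : ℝ := C * M / (i:ℝ) ^ p * (π ^ 2 / 6) / t ^ 2 with hK
  have houter : ∀ l : ℕ,
      ‖(∑' j : ℕ, a (l+1) i (j+1) * y (j+1)) * ((t:ℂ) ^ (l+2))⁻¹‖ ≤ K * (C / t) ^ l := by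
    intro l
    rw [norm_mul, norm_inv, norm_pow, Complex.norm_real, Real.norm_of_nonneg ht0.le]
    have h1 : ‖(∑' j : ℕ, a (l+1) i (j+1) * y (j+1))‖ ≤
        C ^ (l+1) * M / (i:ℝ) ^ p * (π ^ 2 / 6) := hinner l
    have h2 : (0:ℝ) ≤ (t ^ (l+2))⁻¹ := by positivity
    calc ‖(∑' j : ℕ, a (l+1) i (j+1) * y (j+1))‖ * (t ^ (l+2))⁻¹
        ≤ (C ^ (l+1) * M / (i:ℝ) ^ p * (π ^ 2 / 6)) * (t ^ (l+2))⁻¹ :=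
          mul_le_mul_of_nonneg_right h1 h2
      _ = K * (C / t) ^ l := by
          rw [hK, div_pow]
          rw [pow_add C l 1, pow_add t l 2]
          field_simp
  have hgeo : Summable (fun l : ℕ => K * (C / t) ^ l) :=
    (summable_geometric_of_lt_one hr0 (hr1.trans (by norm_num))).mul_left K
  have hsum_outer : Summable (fun l : ℕ =>
      (∑' j : ℕ, a (l+1) i (j+1) * y (j+1)) * ((t:ℂ) ^ (l+2))⁻¹) :=
    Summable.of_norm_bounded hgeo houter
  have hK0 : 0 ≤ K := by positivity
  have htsum_outer : ‖∑' l : ℕ,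
      (∑' j : ℕ, a (l+1) i (j+1) * y (j+1)) * ((t:ℂ) ^ (l+2))⁻¹‖ ≤
      K * (1 - C / t)⁻¹ := by
    have hsn : Summable (fun l : ℕ =>
        ‖(∑' j : ℕ, a (l+1) i (j+1) * y (j+1)) * ((t:ℂ) ^ (l+2))⁻¹‖) :=
      Summable.of_nonneg_of_le (fun l => norm_nonneg _) houter hgeo
    calc ‖∑' l : ℕ, (∑' j : ℕ, a (l+1) i (j+1) * y (j+1)) * ((t:ℂ) ^ (l+2))⁻¹‖
        ≤ ∑' l : ℕ, ‖(∑' j : ℕ, a (l+1) i (j+1) * y (j+1)) * ((t:ℂ) ^ (l+2))⁻¹‖ :=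
          norm_tsum_le_tsum_norm hsn
      _ ≤ ∑' l : ℕ, K * (C / t) ^ l := Summable.tsum_le_tsum houter hsn hgeo
      _ = K * (1 - C / t)⁻¹ := by
          rw [tsum_mul_left, tsum_geometric_of_lt_one hr0 (hr1.trans (by norm_num))]
  -- combine
  have hfirst : ‖y i * (t:ℂ)⁻¹‖ * (i:ℝ) ^ p ≤ (1 / (2 * C)) * P := by
    rw [norm_mul, norm_inv, Complex.norm_real, Real.norm_of_nonneg ht0.le]
    have hPy := hP i hi
    have : ‖y i‖ * t⁻¹ * (i:ℝ) ^ p = (‖y i‖ * (i:ℝ) ^ p) * t⁻¹ := by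
      ring
    rw [this]
    have hP0 : 0 ≤ P := le_trans (by positivity) ((hP i hi).trans_eq rfl |>.trans_eq rfl) |>.trans (le_refl _) |>.trans (le_refl _)
    have htinv : t⁻¹ ≤ (2 * C)⁻¹ := by
      apply inv_anti₀ (by positivity) ht.le
    calc (‖y i‖ * (i:ℝ) ^ p) * t⁻¹ ≤ P * (2 * C)⁻¹ :=
          mul_le_mul hPy htinv (by positivity) hP0
      _ = (1 / (2 * C)) * P := by ring
  have hsecond : K * (1 - C / t)⁻¹ * (i:ℝ) ^ p ≤ (π ^ 2 / (12 * C)) * M := by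
    rw [hK]
    have h1 : (0:ℝ) < 1 - C / t := by linarith
    have h2 : (1 - C / t)⁻¹ ≤ 2 := by
      rw [inv_le_comm₀ (by linarith) (by norm_num)]
      linarith
    have hq : C / t ^ 2 ≤ 1 / (4 * C) := by
      rw [div_le_div_iff₀ (by positivity) (by positivity)]
      nlinarith
    have hKi : C * M / (i:ℝ) ^ p * (π ^ 2 / 6) / t ^ 2 * (i:ℝ) ^ p
        = C * M * (π ^ 2 / 6) / t ^ 2 := by
      field_simp
    have : C * M / (i:ℝ) ^ p * (π ^ 2 / 6) / t ^ 2 * (1 - C / t)⁻¹ * (i:ℝ) ^ p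
        = (M * (π ^ 2 / 6)) * (C / t ^ 2 * (1 - C / t)⁻¹) := by
      have e : C * M / (i:ℝ) ^ p * (π ^ 2 / 6) / t ^ 2 * (1 - C / t)⁻¹ * (i:ℝ) ^ p
          = (C * M / (i:ℝ) ^ p * (π ^ 2 / 6) / t ^ 2 * (i:ℝ) ^ p) * (1 - C / t)⁻¹ := by
        ring
      rw [e, hKi]; ring
    rw [this]
    have hpi : (0:ℝ) ≤ π ^ 2 / 6 := by positivity
    have h3 : C / t ^ 2 * (1 - C / t)⁻¹ ≤ (1 / (4 * C)) * 2 :=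
      mul_le_mul hq h2 (by positivity) (by positivity)
    calc (M * (π ^ 2 / 6)) * (C / t ^ 2 * (1 - C / t)⁻¹)
        ≤ (M * (π ^ 2 / 6)) * ((1 / (4 * C)) * 2) :=
          mul_le_mul_of_nonneg_left h3 (by positivity)
      _ = (π ^ 2 / (12 * C)) * M := by field_simp; ring
  calc ‖y i * (t:ℂ)⁻¹ +
          ∑' l : ℕ, (∑' j : ℕ, a (l+1) i (j+1) * y (j+1)) * ((t:ℂ) ^ (l+2))⁻¹‖ * (i:ℝ) ^ p
      ≤ (‖y i * (t:ℂ)⁻¹‖ + K * (1 - C / t)⁻¹) * (i:ℝ) ^ p := by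
        apply mul_le_mul_of_nonneg_right _ hip0.le
        calc ‖y i * (t:ℂ)⁻¹ + _‖
            ≤ ‖y i * (t:ℂ)⁻¹‖ + ‖∑' l : ℕ,
                (∑' j : ℕ, a (l+1) i (j+1) * y (j+1)) * ((t:ℂ) ^ (l+2))⁻¹‖ :=
              norm_add_le _ _
          _ ≤ _ := by linarith [htsum_outer]
    _ = ‖y i * (t:ℂ)⁻¹‖ * (i:ℝ) ^ p + K * (1 - C / t)⁻¹ * (i:ℝ) ^ p := by ring
    _ ≤ (1 / (2 * C)) * P + (π ^ 2 / (12 * C)) * M := add_le_add hfirst hsecond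
end

section
/- Let h : {Re z > 0} → ℂ be holomorphic, continuous up to the boundary on {Re z ≥ 1/k} for some k ∈ ℕ. Suppose (i) |h(z)| ≤ B e^{(1/k)|z|} for all z with Re(z) ≥ 1/k (slowly increasing bound), and (ii) for every n ∈ ℕ there is a constant C_n with |h(t)| e^{nt} ≤ C_n for all real t ≥ 1/k (rapid decay on the positive real axis). Then for every k there is a constant C with |h(z)| ≤ C e^{(1/k)|z| - k Re(z)} for all z with Re(z) ≥ 1/k. (Phragmén–Lindelöf transfer of decay from the real axis to a right half-plane, done in two quarter-plane sectors of opening π/2.) -/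
open Set Complex Filter

set_option maxHeartbeats 1600000


/-- Phragmén–Lindelöf transfer: a holomorphic function of slow growth on the right
half-plane which decays faster than every exponential on the positive real axis
satisfies `|h(z)| ≤ C e^{(1/k)|z| - k Re z}` on each half-plane `Re z ≥ 1/k`. -/
theorem phragmen_lindelof_transfer (k₀ : ℕ) (hk₀ : 1 ≤ k₀) (h : ℂ → ℂ)
    (hol : DifferentiableOn ℂ h {z : ℂ | 0 < z.re})
    (hgrow : ∀ k : ℕ, 1 ≤ k → ∃ B : ℝ, ∀ z : ℂ, 1 / (k : ℝ) ≤ z.re →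
      ‖h z‖ ≤ B * Real.exp (‖z‖ / k))
    (hdecay : ∀ n : ℕ, ∃ Cn : ℝ, ∀ t : ℝ, 1 / (k₀ : ℝ) ≤ t →
      ‖h (t : ℂ)‖ * Real.exp ((n : ℝ) * t) ≤ Cn) :
    ∀ k : ℕ, 1 ≤ k → ∃ C : ℝ, ∀ z : ℂ, 1 / (k : ℝ) ≤ z.re →
      ‖h z‖ ≤ C * Real.exp (‖z‖ / k - (k : ℝ) * z.re) := by
  intro k hk
  have hkR : (1 : ℝ) ≤ k := by exact_mod_cast hk
  have hkpos : (0 : ℝ) < k := by linarith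
  have hk0R : (1 : ℝ) ≤ k₀ := by exact_mod_cast hk₀
  obtain ⟨B₀, hB₀⟩ := hgrow (2 * k) (by omega)
  set B : ℝ := max B₀ 1 with hBdef
  have hB1 : (1 : ℝ) ≤ B := le_max_right _ _
  have hBpos : (0 : ℝ) < B := lt_of_lt_of_le one_pos hB1
  have h2k : ((2 * k : ℕ) : ℝ) = 2 * k := by push_cast; ring
  have hB : ∀ z : ℂ, 1 / (2 * (k : ℝ)) ≤ z.re →
      ‖h z‖ ≤ B * Real.exp (‖z‖ / (2 * k)) := by
    intro z hz
    have := hB₀ z (by rw [h2k]; exact hz)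
    rw [h2k] at this
    exact this.trans (by gcongr; exact le_max_left _ _)
  obtain ⟨Ck, hCk⟩ := hdecay k
  set c : ℝ := 1 / k with hcdef
  have hcpos : 0 < c := by positivity
  have hc1 : c ≤ 1 := by rw [hcdef]; rw [div_le_one hkpos]; exact hkR
  -- bound on the real half-line [1/k, ∞)
  set Creal : ℝ := max Ck (B * Real.exp (1 / (2 * k) + k)) with hCrealdef
  have hre : ∀ t : ℝ, c ≤ t → ‖h (t : ℂ)‖ * Real.exp ((k : ℝ) * t) ≤ Creal := by
    intro t ht
    have htpos : 0 < t := lt_of_lt_of_le hcpos ht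
    rcases le_total (1 / (k₀ : ℝ)) t with h1 | h1
    · exact (hCk t h1).trans (le_max_left _ _)
    · have ht1 : t ≤ 1 := h1.trans (by rw [div_le_one (by linarith)]; exact hk0R)
      have hre2 : 1 / (2 * (k : ℝ)) ≤ (t : ℂ).re := by
        rw [Complex.ofReal_re]
        refine le_trans ?_ ht
        rw [hcdef]
        rw [div_le_div_iff₀ (by positivity) hkpos]
        linarith
      have h1 := hB (t : ℂ) hre2
      have habs : ‖(t : ℂ)‖ = t := by
        rw [Complex.norm_real, Real.norm_of_nonneg htpos.le]
      rw [habs] at h1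
      refine le_trans ?_ (le_max_right _ _)
      calc ‖h (t : ℂ)‖ * Real.exp ((k : ℝ) * t)
          ≤ (B * Real.exp (t / (2 * k))) * Real.exp ((k : ℝ) * t) := by
            gcongr
        _ = B * Real.exp (t / (2 * k) + k * t) := by rw [mul_assoc, ← Real.exp_add]
        _ ≤ B * Real.exp (1 / (2 * k) + k) := by
            refine mul_le_mul_of_nonneg_left (Real.exp_le_exp.2 ?_) hBpos.le
            have h2 : t / (2 * (k : ℝ)) ≤ 1 / (2 * k) := by gcongr
            nlinarith
  set Cmax : ℝ := max Creal (B * Real.exp (1 / (2 * k ^ 2) + 1)) with hCmaxdef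
  -- the key quadrant estimate
  have key : ∀ s : ℝ, (s = 1 ∨ s = -1) → ∀ w : ℂ, 0 ≤ w.re → 0 ≤ s * w.im →
      ‖h (w + (c : ℂ))‖ *
        Real.exp ((k : ℝ) * (w.re + c) - (s / k) * w.im) ≤ Cmax := by
    intro s hs w hwre hwim
    have hs1 : |s| = 1 := by rcases hs with rfl | rfl <;> norm_num
    set μ : ℂ := (k : ℂ) + (s / k : ℝ) * Complex.I with hμdef
    set f : ℂ → ℂ := fun w => h (w + (c : ℂ)) * Complex.exp (μ * (w + (c : ℂ))) with hfdef
    have hμre : ∀ z : ℂ, (μ * z).re = (k : ℝ) * z.re - (s / k) * z.im := by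
      intro z
      rw [Complex.mul_re]
      simp [hμdef]
    have hfabs : ∀ z : ℂ, ‖f z‖ = ‖h (z + (c : ℂ))‖ *
        Real.exp ((k : ℝ) * (z.re + c) - (s / k) * z.im) := by
      intro z
      rw [hfdef]
      simp only [norm_mul, Complex.norm_exp, hμre]
      congr 2
      simp
    -- differentiability
    have hU : IsOpen {w : ℂ | -c < w.re} := isOpen_lt continuous_const Complex.continuous_re
    have hdU : DifferentiableOn ℂ f {w : ℂ | -c < w.re} := by
      refine DifferentiableOn.mul ?_ ((Complex.differentiable_exp.comp
        ((differentiable_id.add_const _).const_mul μ)).differentiableOn)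
      refine DifferentiableOn.comp hol ((differentiable_id.add_const _).differentiableOn) ?_
      intro w hw
      simp only [Set.mem_setOf_eq, Complex.add_re, Complex.ofReal_re] at hw ⊢
      linarith [hw]
    have hclos : ∀ (a b : Set ℝ), closure (a ×ℂ b) ⊆ {w : ℂ | -c < w.re} →
        DiffContOnCl ℂ f (a ×ℂ b) := fun a b hsub =>
      ((hdU.mono hsub).diffContOnCl)
    -- growth bound
    set M : ℝ := 1 / (2 * k) + k + 1 / k with hMdef
    have hMpos : 0 < M := by positivity
    have hgrowth : ∀ w : ℂ, 0 ≤ w.re →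
        ‖f w‖ ≤ (B * Real.exp (M * c)) * Real.exp (M * ‖w‖) := by
      intro w hw
      rw [hfabs]
      have habs : ‖w + (c : ℂ)‖ ≤ ‖w‖ + c := by
        refine (norm_add_le _ _).trans ?_
        rw [Complex.norm_real, Real.norm_of_nonneg hcpos.le]
      have hhb := hB (w + (c : ℂ)) (by
        simp only [Complex.add_re, Complex.ofReal_re]
        rw [hcdef]
        have : 1 / (2 * (k : ℝ)) ≤ 1 / k := by
          rw [div_le_div_iff₀ (by positivity) hkpos]; linarith
        linarith)
      have him : |w.im| ≤ ‖w‖ := Complex.abs_im_le_norm w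
      have hre2 : w.re ≤ ‖w‖ := Complex.re_le_norm w
      have hsim : -((s / k) * w.im) ≤ (1 / k) * ‖w‖ := by
        have h1 : |(s / k) * w.im| ≤ (1 / k) * ‖w‖ := by
          rw [abs_mul, abs_div, hs1]
          rw [abs_of_pos hkpos]
          calc 1 / (k : ℝ) * |w.im| ≤ 1 / k * ‖w‖ := by gcongr
            _ = _ := rfl
        linarith [neg_abs_le ((s / k) * w.im)]
      calc ‖h (w + (c : ℂ))‖ *
            Real.exp ((k : ℝ) * (w.re + c) - s / k * w.im)
          ≤ (B * Real.exp (‖w + (c : ℂ)‖ / (2 * k))) *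
            Real.exp ((k : ℝ) * (w.re + c) - s / k * w.im) := by gcongr
        _ = B * Real.exp (‖w + (c : ℂ)‖ / (2 * k) +
            ((k : ℝ) * (w.re + c) - s / k * w.im)) := by
            rw [mul_assoc, ← Real.exp_add]
        _ ≤ (B * Real.exp (M * c)) * Real.exp (M * ‖w‖) := by
            rw [mul_assoc, ← Real.exp_add]
            refine mul_le_mul_of_nonneg_left (Real.exp_le_exp.2 ?_) hBpos.le
            have hd1 : ‖w + (c : ℂ)‖ / (2 * (k : ℝ)) ≤
                (‖w‖ + c) / (2 * k) := by gcongr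
            have hd2 : (‖w‖ + c) / (2 * (k : ℝ)) =
                (1 / (2 * k)) * ‖w‖ + (1 / (2 * k)) * c := by ring
            have hd3 : (1 : ℝ) / (2 * k) ≤ M := by
              rw [hMdef]
              have hik : (0:ℝ) < 1 / k := by positivity
              linarith
            have habsnn : 0 ≤ ‖w‖ := norm_nonneg w
            rw [hMdef]
            nlinarith [Real.exp_pos c]
    have hO : ∀ Q : Set ℂ, (∀ w ∈ Q, 0 ≤ w.re) →
        f =O[Bornology.cobounded ℂ ⊓ Filter.principal Q]
          fun z => Real.exp (M * ‖z‖ ^ (1 : ℝ)) := by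
      intro Q hQ
      rw [Asymptotics.isBigO_iff]
      refine ⟨B * Real.exp (M * c), ?_⟩
      rw [Filter.eventually_inf_principal]
      refine Filter.Eventually.of_forall fun w hw => ?_
      rw [Real.rpow_one, Real.norm_of_nonneg (Real.exp_pos _).le]
      exact hgrowth w (hQ w hw)
    -- boundary bound on the real axis
    have hre' : ∀ x : ℝ, 0 ≤ x → ‖f (x : ℂ)‖ ≤ Cmax := by
      intro x hx
      rw [hfabs]
      simp only [Complex.ofReal_re, Complex.ofReal_im, mul_zero, sub_zero]
      have hxc : ((x : ℂ) + (c : ℂ)) = ((x + c : ℝ) : ℂ) := by push_cast; ring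
      rw [hxc]
      refine le_trans ?_ (le_max_left _ _)
      exact hre (x + c) (by linarith)
    -- boundary bound on the vertical line
    have hvert : ∀ x : ℝ, 0 ≤ s * x → ‖f ((x : ℂ) * Complex.I)‖ ≤ Cmax := by
      intro x hx
      rw [hfabs]
      have e1 : ((x : ℂ) * Complex.I).re = 0 := by simp
      have e2 : ((x : ℂ) * Complex.I).im = x := by simp
      rw [e1, e2, zero_add]
      have hsx : s * x = |x| := by
        rcases hs with rfl | rfl
        · rw [one_mul] at hx ⊢; exact (_root_.abs_of_nonneg hx).symm
        · rw [neg_one_mul] at hx ⊢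
          rw [abs_of_nonpos (by linarith)]
      have hz1 : ‖(x : ℂ) * Complex.I + (c : ℂ)‖ ≤ |x| + c := by
        refine (norm_add_le _ _).trans ?_
        simp [abs_of_pos hcpos]
      have hzre : ((x : ℂ) * Complex.I + (c : ℂ)).re = c := by simp
      have hhb := hB ((x : ℂ) * Complex.I + (c : ℂ)) (by
        rw [hzre, hcdef]
        rw [div_le_div_iff₀ (by positivity) hkpos]; linarith)
      refine le_trans ?_ (le_max_right _ _)
      calc ‖h ((x : ℂ) * Complex.I + (c : ℂ))‖ *
            Real.exp ((k : ℝ) * c - s / k * x)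
          ≤ (B * Real.exp ((|x| + c) / (2 * k))) *
            Real.exp ((k : ℝ) * c - s / k * x) := by
            gcongr
            exact hhb.trans (by gcongr)
        _ ≤ B * Real.exp (1 / (2 * k ^ 2) + 1) := by
            rw [mul_assoc, ← Real.exp_add]
            refine mul_le_mul_of_nonneg_left (Real.exp_le_exp.2 ?_) hBpos.le
            have hkc : (k : ℝ) * c = 1 := by
              rw [hcdef]; field_simp
            have hsk : s / (k : ℝ) * x = |x| / k := by
              rw [div_mul_eq_mul_div, hsx]
            rw [hkc, hsk]
            have h1 : (|x| + c) / (2 * (k : ℝ)) = |x| / (2 * k) + c / (2 * k) := by ring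
            have h2 : |x| / (2 * (k : ℝ)) ≤ |x| / k := by
              gcongr
              linarith
            have h3 : c / (2 * (k : ℝ)) = 1 / (2 * k ^ 2) := by
              rw [hcdef]; field_simp
            linarith
    -- apply Phragmén–Lindelöf in the appropriate quadrant
    have hCmaxge : ‖f w‖ ≤ Cmax := by
      have hQre : ∀ (b : Set ℝ), ∀ u ∈ (Set.Ioi (0:ℝ) ×ℂ b), 0 ≤ u.re := by
        intro b u hu
        rw [Complex.mem_reProdIm] at hu
        exact (Set.mem_Ioi.1 hu.1).le
      have hsub : ∀ (b : Set ℝ), Set.Ici (0:ℝ) ×ℂ b ⊆ {u : ℂ | -c < u.re} := by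
        intro b u hu
        rw [Complex.mem_reProdIm] at hu
        have := Set.mem_Ici.1 hu.1
        simp only [Set.mem_setOf_eq]
        linarith
      rcases hs with rfl | rfl
      · have hd : DiffContOnCl ℂ f (Set.Ioi 0 ×ℂ Set.Ioi 0) := by
          refine hclos _ _ ?_
          rw [Complex.closure_reProdIm, closure_Ioi]
          exact hsub _
        exact PhragmenLindelof.quadrant_I hd ⟨1, one_lt_two, M, hO _ (hQre _)⟩ hre'
          (fun x hx => hvert x (by rw [one_mul]; exact hx)) hwre
          (by rw [one_mul] at hwim; exact hwim)
      · have hd : DiffContOnCl ℂ f (Set.Ioi 0 ×ℂ Set.Iio 0) := by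
          refine hclos _ _ ?_
          rw [Complex.closure_reProdIm, closure_Ioi]
          exact hsub _
        exact PhragmenLindelof.quadrant_IV hd ⟨1, one_lt_two, M, hO _ (hQre _)⟩ hre'
          (fun x hx => hvert x (by rw [neg_one_mul]; linarith)) hwre
          (by rw [neg_one_mul] at hwim; linarith)
    rw [hfabs] at hCmaxge
    exact hCmaxge
  -- conclude
  have hCmaxpos : 0 < Cmax :=
    lt_of_lt_of_le (by positivity) (le_max_right _ _)
  refine ⟨Cmax, fun z hz => ?_⟩
  have hwre : 0 ≤ (z - (c : ℂ)).re := by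
    simp only [Complex.sub_re, Complex.ofReal_re]
    rw [hcdef] at *
    linarith
  have hwc : z - (c : ℂ) + (c : ℂ) = z := by ring
  rcases le_total 0 z.im with him | him
  · have h1 := key 1 (Or.inl rfl) (z - (c : ℂ)) hwre (by
      simp only [Complex.sub_im, Complex.ofReal_im, sub_zero, one_mul]; exact him)
    rw [hwc] at h1
    simp only [Complex.sub_re, Complex.sub_im, Complex.ofReal_re, Complex.ofReal_im,
      sub_add_cancel, sub_zero] at h1
    have h2 : ‖h z‖ ≤ Cmax *
        Real.exp (-((k : ℝ) * z.re - 1 / k * z.im)) := by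
      rw [Real.exp_neg, ← div_eq_mul_inv, le_div_iff₀ (Real.exp_pos _)]
      exact h1
    refine h2.trans ?_
    refine mul_le_mul_of_nonneg_left (Real.exp_le_exp.2 ?_) hCmaxpos.le
    have h3 : z.im ≤ ‖z‖ := Complex.im_le_norm z
    have h4 : 1 / (k : ℝ) * z.im ≤ ‖z‖ / k := by
      have e : 1 / (k : ℝ) * z.im = z.im / k := by ring
      rw [e]
      gcongr
    linarith
  · have h1 := key (-1) (Or.inr rfl) (z - (c : ℂ)) hwre (by
      simp only [Complex.sub_im, Complex.ofReal_im, sub_zero, neg_one_mul]; linarith)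
    rw [hwc] at h1
    simp only [Complex.sub_re, Complex.sub_im, Complex.ofReal_re, Complex.ofReal_im,
      sub_add_cancel, sub_zero] at h1
    have h2 : ‖h z‖ ≤ Cmax *
        Real.exp (-((k : ℝ) * z.re - (-1) / k * z.im)) := by
      rw [Real.exp_neg, ← div_eq_mul_inv, le_div_iff₀ (Real.exp_pos _)]
      exact h1
    refine h2.trans ?_
    refine mul_le_mul_of_nonneg_left (Real.exp_le_exp.2 ?_) hCmaxpos.le
    have h3 : -z.im ≤ ‖z‖ := by
      have h5 := (abs_le.1 (Complex.abs_im_le_norm z)).1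
      linarith
    have h4 : (-1) / (k : ℝ) * z.im ≤ ‖z‖ / k := by
      have e : (-1) / (k : ℝ) * z.im = -z.im / k := by ring
      rw [e]
      gcongr
    linarith
end
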